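/- The function ν₂(t) = (-1 + e^{-2√3 t} + 2√3 t e^{-√3 t})/√3 is negative for all t > 0. -/
import Mathlib

theorem stmt_17 (t : ℝ) (ht : 0 < t) :
    (-1 + Real.exp (-2 * Real.sqrt 3 * t) +
      2 * Real.sqrt 3 * t * Real.exp (-Real.sqrt 3 * t)) / Real.sqrt 3 < 0 := by
  have h3 : (0:ℝ) < Real.sqrt 3 := by positivity
  set s := Real.sqrt 3 * t with hsdef
  have hs : 0 < s := by positivity
  have e1 : -2 * Real.sqrt 3 * t = -(2*s) := by rw [hsdef]; ring
  have e2 : -Real.sqrt 3 * t = -s := by rw [hsdef]; ring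
  have e3 : 2 * Real.sqrt 3 * t = 2*s := by rw [hsdef]; ring
  rw [e1, e2, e3]
  apply div_neg_of_neg_of_pos _ h3
  have hsinh := Real.self_lt_sinh_iff.mpr hs
  rw [Real.sinh_eq] at hsinh
  have h2 : Real.exp (-(2*s)) = Real.exp (-s) * Real.exp (-s) := by
    rw [← Real.exp_add]; ring_nf
  have h4 : Real.exp s * Real.exp (-s) = 1 := by
    rw [← Real.exp_add]; simp
  have h5 : 0 < Real.exp (-s) := Real.exp_pos _
  nlinarith [Real.exp_pos s]
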